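/- Let G be a topological group, U ⊆ G open, V a Hausdorff topological space, and E a locally convex space. If f : U × V → E is a C^{1,0}-map, then the map f^∨ : U → C(V,E), x ↦ f(x,·), into the space C(V,E) of continuous maps with the compact-open topology (a Hausdorff topological vector space), is C¹, and d(f^∨)(x,γ) = (d^{(1,0)}f)(x,·,γ) ∈ C(V,E) for all x ∈ U and γ ∈ 𝔏(G), i.e. D_γ(f^∨)(x)(y) = D_{(γ,0)}f(x,y) for all y ∈ V. -/

import Mathlib

open Filter Topology Set

/-- The set of continuous one-parameter subgroups `γ : (ℝ,+) → G`, as a subtype of `C(ℝ, G)`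
(hence endowed with the compact-open topology). -/
abbrev OneParam (G : Type*) [TopologicalSpace G] [Group G] : Type _ :=
  {γ : C(ℝ, G) // ∀ s t : ℝ, γ (s + t) = γ s * γ t}

/-- `D_γ f(x) = v`, i.e. `(1/t)(f(x·γ(t)) − f(x)) → v` as `t → 0` (for maps into any
Hausdorff topological `ℝ`-vector space, such as `C(V,E)` with the compact-open topology). -/
def HasDirDeriv {G E : Type*} [TopologicalSpace G] [Group G]
    [AddCommGroup E] [Module ℝ E] [TopologicalSpace E]
    (f : G → E) (x : G) (γ : OneParam G) (v : E) : Prop :=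
  Tendsto (fun t : ℝ => t⁻¹ • (f (x * γ.1 t) - f x)) (𝓝[≠] (0 : ℝ)) (𝓝 v)

private lemma oneParam_zero {G : Type*} [TopologicalSpace G] [Group G] (γ : OneParam G) :
    γ.1 0 = 1 := by
  have h := γ.2 0 0
  rw [add_zero] at h
  exact mul_eq_left.mp h.symm

private lemma hasDerivAt_phi {G E : Type*} [TopologicalSpace G] [Group G]
    [AddCommGroup E] [Module ℝ E] [TopologicalSpace E] [IsTopologicalAddGroup E]
    [ContinuousSMul ℝ E]
    {g : G → E} {x : G} {γ : OneParam G} {s : ℝ} {v : E}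
    (h : HasDirDeriv g (x * γ.1 s) γ v) (φ : E →L[ℝ] ℝ) :
    HasDerivAt (fun u : ℝ => φ (g (x * γ.1 u))) (φ v) s := by
  rw [hasDerivAt_iff_tendsto_slope_zero]
  have h2 := (φ.continuous.tendsto v).comp h
  refine h2.congr fun t => ?_
  show φ (t⁻¹ • (g (x * γ.1 s * γ.1 t) - g (x * γ.1 s)))
      = t⁻¹ • (φ (g (x * γ.1 (s + t))) - φ (g (x * γ.1 s)))
  rw [γ.2 s t, ← mul_assoc, map_smul, map_sub]

/-- If `f : U × V → E` is `C^{1,0}` (with `V` a Hausdorff topological space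
and partial derivative map `d10`), then `f^∨ : U → C(V,E)`, `x ↦ f(x,·)`, is `C¹` into the
space `C(V,E)` with the compact-open topology, with `d(f^∨)(x,γ) = d^{(1,0)}f(x,·,γ)`,
i.e. `D_γ(f^∨)(x)(y) = D_{(γ,0)}f(x,y)` for all `y ∈ V`. -/
theorem vee_isC1_of_isC10
    {G V E : Type*} [Group G] [TopologicalSpace G] [IsTopologicalGroup G]
    [TopologicalSpace V] [T2Space V]
    [AddCommGroup E] [Module ℝ E] [TopologicalSpace E] [IsTopologicalAddGroup E]
    [ContinuousSMul ℝ E] [LocallyConvexSpace ℝ E] [T2Space E]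
    (U : Set G) (hU : IsOpen U) (f : G → V → E) (d10 : G → V → OneParam G → E)
    (hf : ContinuousOn (fun p : G × V => f p.1 p.2) (U ×ˢ (univ : Set V)))
    (hd : ∀ x ∈ U, ∀ (y : V) (γ : OneParam G),
      HasDirDeriv (fun x' => f x' y) x γ (d10 x y γ))
    (hdc : ContinuousOn (fun p : G × V × OneParam G => d10 p.1 p.2.1 p.2.2)
      (U ×ˢ (univ : Set (V × OneParam G)))) :
    ∀ (Fv : G → C(V, E)) (Dv : G → OneParam G → C(V, E)),
      (∀ x ∈ U, ∀ y : V, Fv x y = f x y) →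
      (∀ x ∈ U, ∀ (γ : OneParam G) (y : V), Dv x γ y = d10 x y γ) →
      ContinuousOn Fv U ∧
      (∀ x ∈ U, ∀ γ : OneParam G, HasDirDeriv Fv x γ (Dv x γ)) ∧
      ContinuousOn (fun p : G × OneParam G => Dv p.1 p.2)
        (U ×ˢ (univ : Set (OneParam G))) := by
  intro Fv Dv hFv hDv
  refine ⟨?_, ?_, ?_⟩
  · -- continuity of Fv on U
    rw [continuousOn_iff_continuous_restrict]
    apply ContinuousMap.continuous_of_continuous_uncurry
    have h1 : Continuous (fun p : ↥U × V => f (p.1 : G) p.2) := by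
      have hm : Continuous (fun p : ↥U × V => (((p.1 : G), p.2) : G × V)) :=
        (continuous_subtype_val.comp continuous_fst).prodMk continuous_snd
      exact hf.comp_continuous hm fun p => ⟨p.1.2, mem_univ _⟩
    exact h1.congr fun p => (hFv p.1 p.1.2 p.2).symm
  · -- differentiability
    intro x hx γ
    letI : UniformSpace E := IsTopologicalAddGroup.rightUniformSpace E
    haveI : IsUniformAddGroup E := isUniformAddGroup_of_addCommGroup
    refine (ContinuousMap.tendsto_iff_forall_isCompact_tendstoUniformlyOn).mpr ?_
    intro K hK u hu
    rw [uniformity_eq_comap_nhds_zero E, Filter.mem_comap] at hu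
    obtain ⟨W, hW, hWu⟩ := hu
    -- a closed convex neighborhood of 0 inside W
    obtain ⟨T, hT, hTc, hTW⟩ := exists_mem_nhds_isClosed_subset hW
    obtain ⟨C, hC, hCconv, hCT⟩ :=
      (locallyConvexSpace_iff_exists_convex_subset ℝ E).mp inferInstance 0 T hT
    set W' : Set E := closure C with hW'def
    have hW'closed : IsClosed W' := isClosed_closure
    have hW'conv : Convex ℝ W' := hCconv.closure
    have hW'nhds : W' ∈ 𝓝 (0 : E) := mem_of_superset hC subset_closure
    have hW'W : W' ⊆ W := fun z hz => hTW (hTc.closure_subset_iff.mpr hCT hz)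
    -- domain of the curve
    have hγcont : Continuous fun s : ℝ => x * γ.1 s := continuous_const.mul γ.1.continuous
    set S : Set ℝ := (fun s : ℝ => x * γ.1 s) ⁻¹' U with hSdef
    have hSopen : IsOpen S := hU.preimage hγcont
    have hS0 : (0 : ℝ) ∈ S := by
      simp only [hSdef, mem_preimage, oneParam_zero γ, mul_one]
      exact hx
    -- the difference of partial derivatives
    set g : ℝ × V → E := fun p => d10 (x * γ.1 p.1) p.2 γ - d10 x p.2 γ with hgdef
    have hgcont : ContinuousOn g (S ×ˢ (univ : Set V)) := by
      have h1 : ContinuousOn (fun p : ℝ × V => d10 (x * γ.1 p.1) p.2 γ)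
          (S ×ˢ (univ : Set V)) := by
        have hm : Continuous (fun p : ℝ × V => ((x * γ.1 p.1, p.2, γ) : G × V × OneParam G)) :=
          (hγcont.comp continuous_fst).prodMk (continuous_snd.prodMk continuous_const)
        exact hdc.comp hm.continuousOn fun p hp => ⟨hp.1, mem_univ _⟩
      have h2 : ContinuousOn (fun p : ℝ × V => d10 x p.2 γ) (S ×ˢ (univ : Set V)) := by
        have hm : Continuous (fun p : ℝ × V => ((x, p.2, γ) : G × V × OneParam G)) :=
          continuous_const.prodMk (continuous_snd.prodMk continuous_const)
        exact hdc.comp hm.continuousOn fun p _ => ⟨hx, mem_univ _⟩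
      exact h1.sub h2
    -- tube lemma
    have hΩopen : IsOpen ((S ×ˢ (univ : Set V)) ∩ g ⁻¹' interior W') :=
      hgcont.isOpen_inter_preimage (hSopen.prod isOpen_univ) isOpen_interior
    have hsub : ({0} ×ˢ K : Set (ℝ × V)) ⊆ (S ×ˢ (univ : Set V)) ∩ g ⁻¹' interior W' := by
      rintro ⟨s, y⟩ ⟨hs, hy⟩
      simp only [mem_singleton_iff] at hs
      subst hs
      refine ⟨⟨hS0, mem_univ _⟩, ?_⟩
      have hg0 : g (0, y) = 0 := by simp [hgdef, oneParam_zero γ]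
      rw [mem_preimage, hg0]
      exact mem_interior_iff_mem_nhds.mpr hW'nhds
    obtain ⟨u₁, v₁, hu₁o, _hv₁o, h0u₁, hKv₁, huv⟩ :=
      generalized_tube_lemma isCompact_singleton hK hΩopen hsub
    obtain ⟨δ₁, hδ₁, hball₁⟩ := Metric.isOpen_iff.mp hu₁o 0 (h0u₁ rfl)
    obtain ⟨δ₂, hδ₂, hball₂⟩ := Metric.isOpen_iff.mp hSopen 0 hS0
    set δ : ℝ := min δ₁ δ₂ with hδdef
    have hδpos : 0 < δ := lt_min hδ₁ hδ₂
    have hballS : Metric.ball (0 : ℝ) δ ⊆ S := fun s hs =>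
      hball₂ (Metric.ball_subset_ball (min_le_right _ _) hs)
    have hballu₁ : Metric.ball (0 : ℝ) δ ⊆ u₁ := fun s hs =>
      hball₁ (Metric.ball_subset_ball (min_le_left _ _) hs)
    filter_upwards [mem_nhdsWithin_of_mem_nhds (Metric.ball_mem_nhds (0 : ℝ) hδpos),
      self_mem_nhdsWithin] with t ht htne
    intro y hy
    have habs : |t| < δ := by simpa [Real.dist_eq] using ht
    have htS : t ∈ S := hballS ht
    have hxt : x * γ.1 t ∈ U := htS
    have hgoal : ((t⁻¹ • (Fv (x * γ.1 t) - Fv x)) y) - Dv x γ y ∈ W →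
        (Dv x γ y, (t⁻¹ • (Fv (x * γ.1 t) - Fv x)) y) ∈ u := fun h => hWu h
    apply hgoal
    have hediff : ((t⁻¹ • (Fv (x * γ.1 t) - Fv x)) y) - Dv x γ y
        = t⁻¹ • (f (x * γ.1 t) y - f x y) - d10 x y γ := by
      simp [hFv _ hxt, hFv _ hx, hDv _ hx]
    rw [hediff]
    refine hW'W ?_
    set z : E := t⁻¹ • (f (x * γ.1 t) y - f x y) - d10 x y γ with hzdef
    by_contra hz
    obtain ⟨φ, u₀, hφW', hφz⟩ := geometric_hahn_banach_closed_point hW'conv hW'closed hz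
    set ψ : ℝ → ℝ := fun s => φ (f (x * γ.1 s) y) with hψdef
    have hψc : ∀ a b : ℝ, Icc a b ⊆ Metric.ball (0 : ℝ) δ → ContinuousOn ψ (Icc a b) := by
      intro a b hab
      have hm : Continuous (fun s : ℝ => ((x * γ.1 s, y) : G × V)) :=
        hγcont.prodMk continuous_const
      have hcc : ContinuousOn (fun s : ℝ => f (x * γ.1 s) y) (Icc a b) :=
        hf.comp hm.continuousOn fun s hs => ⟨hballS (hab hs), mem_univ _⟩
      exact φ.continuous.comp_continuousOn hcc
    have hψd : ∀ s ∈ Metric.ball (0 : ℝ) δ, HasDerivAt ψ (φ (d10 (x * γ.1 s) y γ)) s :=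
      fun s hs => hasDerivAt_phi (hd _ (hballS hs) y γ) φ
    have hmain : ∃ c ∈ Metric.ball (0 : ℝ) δ,
        φ (d10 (x * γ.1 c) y γ) = (ψ t - ψ 0) / t := by
      rcases lt_or_gt_of_ne htne with htn | htp
      · have hIcc : Icc t 0 ⊆ Metric.ball (0 : ℝ) δ := by
          intro s hs
          simp only [Metric.mem_ball, Real.dist_eq, sub_zero]
          rw [abs_lt] at habs ⊢
          exact ⟨by linarith [hs.1], by linarith [hs.2]⟩
        obtain ⟨c, hc, hceq⟩ := exists_hasDerivAt_eq_slope ψ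
          (fun s => φ (d10 (x * γ.1 s) y γ)) htn (hψc t 0 hIcc)
          (fun s hs => hψd s (hIcc (Ioo_subset_Icc_self hs)))
        refine ⟨c, hIcc (Ioo_subset_Icc_self hc), ?_⟩
        rw [hceq, zero_sub, ← neg_sub (ψ t) (ψ 0), neg_div_neg_eq]
      · have hIcc : Icc 0 t ⊆ Metric.ball (0 : ℝ) δ := by
          intro s hs
          simp only [Metric.mem_ball, Real.dist_eq, sub_zero]
          rw [abs_lt] at habs ⊢
          exact ⟨by linarith [hs.1], by linarith [hs.2]⟩
        obtain ⟨c, hc, hceq⟩ := exists_hasDerivAt_eq_slope ψ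
          (fun s => φ (d10 (x * γ.1 s) y γ)) htp (hψc 0 t hIcc)
          (fun s hs => hψd s (hIcc (Ioo_subset_Icc_self hs)))
        refine ⟨c, hIcc (Ioo_subset_Icc_self hc), ?_⟩
        rw [hceq, sub_zero]
    obtain ⟨c, hcball, hceq⟩ := hmain
    have hcg : g (c, y) ∈ W' :=
      interior_subset (huv ⟨hballu₁ hcball, hKv₁ hy⟩).2
    have hφg := hφW' _ hcg
    have hφzval : φ z = φ (g (c, y)) := by
      have hψ0 : ψ 0 = φ (f x y) := by simp [hψdef, oneParam_zero γ]
      have e1 : φ z = t⁻¹ * (ψ t - ψ 0) - φ (d10 x y γ) := by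
        simp only [hzdef, map_sub, map_smul, smul_eq_mul]
        rw [hψ0]
      have e2 : φ (g (c, y)) = (ψ t - ψ 0) / t - φ (d10 x y γ) := by
        simp [hgdef, map_sub, hceq]
      rw [e1, e2, div_eq_inv_mul]
    linarith [hφz, hφg, hφzval]
  · -- continuity of Dv on U ×ˢ univ
    rw [continuousOn_iff_continuous_restrict]
    apply ContinuousMap.continuous_of_continuous_uncurry
    have h1 : Continuous (fun p : ↥(U ×ˢ (univ : Set (OneParam G))) × V =>
        d10 (p.1 : G × OneParam G).1 p.2 (p.1 : G × OneParam G).2) := by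
      have hm : Continuous (fun p : ↥(U ×ˢ (univ : Set (OneParam G))) × V =>
          (((p.1 : G × OneParam G).1, p.2, (p.1 : G × OneParam G).2) : G × V × OneParam G)) := by
        have hc : Continuous (fun p : ↥(U ×ˢ (univ : Set (OneParam G))) × V =>
            (p.1 : G × OneParam G)) := continuous_subtype_val.comp continuous_fst
        exact (continuous_fst.comp hc).prodMk (continuous_snd.prodMk (continuous_snd.comp hc))
      exact hdc.comp_continuous hm fun p => ⟨p.1.2.1, mem_univ _⟩
    exact h1.congr fun p => (hDv _ p.1.2.1 _ p.2).symm
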